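/- Suppose f: [0,∞) → (0,∞) is continuous and f(x) ~ x^{−β} as x → ∞ for some β > 0. Let F(x) = ∫₁ˣ du/f(u). Then F⁻¹(x) ~ ((β+1)x)^{1/(1+β)} as x → ∞. -/

import Mathlib

open Filter Real Set

lemma aux_ii (f : ℝ → ℝ) (hf_cont : ContinuousOn f (Set.Ici 0))
    (hf_pos : ∀ x ∈ Set.Ici (0:ℝ), 0 < f x) (a b : ℝ) (ha : 0 ≤ a) (hb : 0 ≤ b) :
    IntervalIntegrable (fun u => 1 / f u) MeasureTheory.volume a b := by
  have hcont : ContinuousOn (fun u => 1 / f u) (Set.Ici 0) :=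
    continuousOn_const.div hf_cont (fun x hx => (hf_pos x hx).ne')
  apply (hcont.mono ?_).intervalIntegrable
  intro x hx
  rw [Set.uIcc] at hx
  exact le_trans (le_min ha hb) hx.1

lemma aux_int_tendsto (f : ℝ → ℝ) (β : ℝ) (hβ : 0 < β)
    (hf_cont : ContinuousOn f (Set.Ici 0))
    (hf_pos : ∀ x ∈ Set.Ici (0:ℝ), 0 < f x)
    (hasym : Tendsto (fun x => f x * x ^ β) atTop (nhds 1)) :
    Tendsto (fun x => (∫ u in (1:ℝ)..x, 1 / f u) * (β + 1) / x ^ (β + 1)) atTop (nhds 1) := by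
  have hii := aux_ii f hf_cont hf_pos
  rw [Metric.tendsto_nhds]
  intro ε hε
  set δ := min (ε/4) (1/4) with hδdef
  have hδpos : 0 < δ := lt_min (by linarith) (by norm_num)
  have hδle : δ ≤ 1/4 := min_le_right _ _
  have hδε : δ ≤ ε/4 := min_le_left _ _
  have h1 : ∀ᶠ u in atTop, |f u * u ^ β - 1| < δ := by
    have := Metric.tendsto_nhds.mp hasym δ hδpos
    simpa [Real.dist_eq] using this
  obtain ⟨A, hA⟩ := (h1.and (eventually_ge_atTop (1:ℝ))).exists_forall_of_atTop
  have hA1 : (1:ℝ) ≤ A := (hA A le_rfl).2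
  -- pointwise bounds for u ≥ A
  have hbound : ∀ u, A ≤ u → (1 - δ) * u ^ β ≤ 1 / f u ∧ 1 / f u ≤ (1 + 2*δ) * u ^ β := by
    intro u hu
    obtain ⟨habs, hu1⟩ := hA u hu
    have hu0 : (0:ℝ) < u := by linarith
    have hup : (0:ℝ) < u ^ β := Real.rpow_pos_of_pos hu0 β
    have hfu : 0 < f u := hf_pos u (le_of_lt hu0)
    have ht1 : 1 - δ < f u * u ^ β := by
      have := abs_lt.mp habs; linarith [this.1]
    have ht2 : f u * u ^ β < 1 + δ := by
      have := abs_lt.mp habs; linarith [this.2]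
    constructor
    · rw [le_div_iff₀ hfu]
      nlinarith [hup.le]
    · rw [div_le_iff₀ hfu]
      nlinarith [hup.le]
  set C := ∫ u in (1:ℝ)..A, 1 / f u with hC
  set PA := A ^ (β + 1) with hPA
  have hPA0 : 0 ≤ PA := Real.rpow_nonneg (by linarith) _
  set D := |C * (β + 1)| + (1 + 2*δ) * PA with hD
  have hD0 : 0 ≤ D := by positivity
  have hPtop : Tendsto (fun x : ℝ => x ^ (β + 1)) atTop atTop :=
    tendsto_rpow_atTop (by linarith)
  have h2 : ∀ᶠ x in atTop, D < δ * x ^ (β + 1) := by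
    filter_upwards [hPtop.eventually_gt_atTop (D / δ)] with x hx
    rw [div_lt_iff₀ hδpos] at hx
    linarith [hx]
  filter_upwards [eventually_ge_atTop A, h2] with x hxA hx2
  have hx1 : (1:ℝ) ≤ x := le_trans hA1 hxA
  have hPx : (0:ℝ) < x ^ (β + 1) := Real.rpow_pos_of_pos (by linarith) _
  -- split the integral
  have hsplit : (∫ u in (1:ℝ)..x, 1 / f u) = C + ∫ u in A..x, 1 / f u := by
    rw [hC, intervalIntegral.integral_add_adjacent_intervals
      (hii 1 A (by norm_num) (by linarith)) (hii A x (by linarith) (by linarith))]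
  have hrpow_ii : IntervalIntegrable (fun u : ℝ => u ^ β) MeasureTheory.volume A x :=
    intervalIntegral.intervalIntegrable_rpow' (by linarith)
  have hrint : (∫ u in A..x, u ^ β) = (x ^ (β + 1) - PA) / (β + 1) := by
    rw [integral_rpow (Or.inl (by linarith))]
  have hJub : (∫ u in A..x, 1 / f u) ≤ (1 + 2*δ) * ((x ^ (β + 1) - PA) / (β + 1)) := by
    have := intervalIntegral.integral_mono_on hxA
      (hii A x (by linarith) (by linarith)) (hrpow_ii.const_mul (1 + 2*δ))
      (fun u hu => (hbound u hu.1).2)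
    rwa [intervalIntegral.integral_const_mul, hrint] at this
  have hJlb : (1 - δ) * ((x ^ (β + 1) - PA) / (β + 1)) ≤ ∫ u in A..x, 1 / f u := by
    have := intervalIntegral.integral_mono_on hxA
      (hrpow_ii.const_mul (1 - δ)) (hii A x (by linarith) (by linarith))
      (fun u hu => (hbound u hu.1).1)
    rwa [intervalIntegral.integral_const_mul, hrint] at this
  have hβ1 : (0:ℝ) < β + 1 := by linarith
  have habsC : -|C * (β + 1)| ≤ C * (β + 1) ∧ C * (β + 1) ≤ |C * (β + 1)| :=
    ⟨neg_abs_le _, le_abs_self _⟩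
  have hub : (∫ u in (1:ℝ)..x, 1 / f u) * (β + 1) < (1 + 3*δ) * x ^ (β + 1) := by
    rw [hsplit]
    have h3 : (C + ∫ u in A..x, 1 / f u) * (β + 1)
        ≤ C * (β + 1) + (1 + 2*δ) * (x ^ (β + 1) - PA) := by
      have := mul_le_mul_of_nonneg_right hJub hβ1.le
      rw [mul_assoc, div_mul_cancel₀ _ hβ1.ne'] at this
      linarith [this]
    nlinarith [hx2, habsC.2, hPA0, hδpos]
  have hlb : (1 - 2*δ) * x ^ (β + 1) < (∫ u in (1:ℝ)..x, 1 / f u) * (β + 1) := by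
    rw [hsplit]
    have h3 : C * (β + 1) + (1 - δ) * (x ^ (β + 1) - PA)
        ≤ (C + ∫ u in A..x, 1 / f u) * (β + 1) := by
      have := mul_le_mul_of_nonneg_right hJlb hβ1.le
      rw [mul_assoc, div_mul_cancel₀ _ hβ1.ne'] at this
      linarith [this]
    nlinarith [hx2, habsC.1, hPA0, hδpos, hδle]
  have hv1 : 1 - 2*δ < (∫ u in (1:ℝ)..x, 1 / f u) * (β + 1) / x ^ (β + 1) :=
    (lt_div_iff₀ hPx).mpr hlb
  have hv2 : (∫ u in (1:ℝ)..x, 1 / f u) * (β + 1) / x ^ (β + 1) < 1 + 3*δ :=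
    (div_lt_iff₀ hPx).mpr hub
  rw [Real.dist_eq, abs_lt]
  constructor <;> linarith

theorem stmt_14 (f F Finv : ℝ → ℝ) (β : ℝ)
    (hβ : 0 < β)
    (hf_cont : ContinuousOn f (Set.Ici 0))
    (hf_pos : ∀ x ∈ Set.Ici (0:ℝ), 0 < f x)
    (hasym : Tendsto (fun x => f x * x ^ β) atTop (nhds 1))
    (hF : ∀ x > (0:ℝ), F x = ∫ u in (1:ℝ)..x, 1 / f u)
    (hFinv_right : ∀ t ≥ (0:ℝ), F (Finv t) = t)
    (hFinv_ge : ∀ t ≥ (0:ℝ), 1 ≤ Finv t)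
    (hFinv_left : ∀ x ≥ (1:ℝ), Finv (F x) = x) :
    Tendsto (fun x => Finv x / (((β + 1) * x) ^ (1 / (1 + β)))) atTop (nhds 1) := by
  have hii := aux_ii f hf_cont hf_pos
  have hG := aux_int_tendsto f β hβ hf_cont hf_pos hasym
  have hβ1 : (0:ℝ) < β + 1 := by linarith
  -- F is monotone on [1, ∞)
  have hFmono : ∀ x y : ℝ, 1 ≤ x → x ≤ y → F x ≤ F y := by
    intro x y hx hxy
    rw [hF x (by linarith), hF y (by linarith),
      ← intervalIntegral.integral_add_adjacent_intervals
        (hii 1 x (by norm_num) (by linarith)) (hii x y (by linarith) (by linarith))]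
    have hnn : 0 ≤ ∫ u in x..y, 1 / f u := by
      apply intervalIntegral.integral_nonneg hxy
      intro u hu
      exact le_of_lt (div_pos one_pos (hf_pos u (by simp; linarith [hu.1])))
    linarith
  -- Finv tends to infinity
  have hFinvTop : Tendsto Finv atTop atTop := by
    rw [tendsto_atTop]
    intro M
    filter_upwards [eventually_ge_atTop (max (F (max M 1) + 1) 0)] with t ht
    have ht0 : (0:ℝ) ≤ t := le_trans (le_max_right _ _) ht
    by_contra h
    push_neg at h
    have h1 : F (Finv t) ≤ F (max M 1) :=
      hFmono _ _ (hFinv_ge t ht0) (le_of_lt (lt_of_lt_of_le h (le_max_left _ _)))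
    rw [hFinv_right t ht0] at h1
    have : F (max M 1) + 1 ≤ t := le_trans (le_max_left _ _) ht
    linarith
  -- composed limit
  have h3 : Tendsto (fun t => (∫ u in (1:ℝ)..(Finv t), 1 / f u) * (β + 1) / (Finv t) ^ (β + 1))
      atTop (nhds 1) := hG.comp hFinvTop
  have h4 : Tendsto (fun t => t * (β + 1) / (Finv t) ^ (β + 1)) atTop (nhds 1) := by
    apply h3.congr'
    filter_upwards [eventually_ge_atTop (0:ℝ)] with t ht
    have h5 : F (Finv t) = ∫ u in (1:ℝ)..(Finv t), 1 / f u :=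
      hF (Finv t) (by linarith [hFinv_ge t ht])
    rw [← h5, hFinv_right t ht]
  have h5 : Tendsto (fun t => (Finv t) ^ (β + 1) / ((β + 1) * t)) atTop (nhds 1) := by
    have h6 := h4.inv₀ one_ne_zero
    rw [inv_one] at h6
    apply h6.congr
    intro t
    simp [inv_div, mul_comm]
  have h7 : Tendsto (fun t => ((Finv t) ^ (β + 1) / ((β + 1) * t)) ^ (1 / (1 + β)))
      atTop (nhds 1) := by
    have hc : ContinuousAt (fun y : ℝ => y ^ (1 / (1 + β))) 1 :=
      Real.continuousAt_rpow_const 1 _ (Or.inl one_ne_zero)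
    have := hc.tendsto.comp h5
    simpa [Real.one_rpow, Function.comp_def] using this
  apply h7.congr'
  filter_upwards [eventually_ge_atTop (1:ℝ)] with t ht
  have ht0 : (0:ℝ) < t := by linarith
  have hFt : (1:ℝ) ≤ Finv t := hFinv_ge t (by linarith)
  have hFt0 : (0:ℝ) ≤ Finv t := by linarith
  rw [Real.div_rpow (Real.rpow_nonneg hFt0 _) (by positivity),
    ← Real.rpow_mul hFt0]
  congr 1
  rw [show (β + 1) * (1 / (1 + β)) = 1 by field_simp; ring, Real.rpow_one]
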